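/- A connected building set B on [n] = {1,…,n} (with n ≥ 2) is invariant under the natural action of the symmetric group S_n on subsets of [n] if and only if there exists k with 2 ≤ k ≤ n such that B consists of all singletons {i}, i ∈ [n], together with all subsets of [n] of cardinality j for every j with k ≤ j ≤ n. -/

import Mathlib

open scoped Classical

noncomputable section

/-- A rooted tree on the vertex set `S ⊆ ℕ`, encoded by its root and its parent
function; edges are directed away from the root (so each non-root vertex `i`
carries the edge `(i, parent i)`, with `parent i` closer to the root).  The
parent function is normalized to be the identity outside `S` and at the root. -/
structure RTree (S : Finset ℕ) where
  root : ℕ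
  root_mem : root ∈ S
  parent : ℕ → ℕ
  parent_out : ∀ i, i ∉ S → parent i = i
  parent_root : parent root = root
  parent_mem : ∀ i ∈ S, parent i ∈ S
  reach : ∀ i ∈ S, ∃ k, parent^[k] i = root

namespace RTree

variable {S : Finset ℕ}

/-- The set `T_{≤ i}` of descendants of `i` in `T` (including `i` itself). -/
def desc (T : RTree S) (i : ℕ) : Finset ℕ :=
  S.filter fun j => ∃ k, T.parent^[k] j = i

/-- The depth of a vertex: its distance to the root. -/
def dp (T : RTree S) (x : ℕ) : ℕ :=
  sInf {k | T.parent^[k] x = T.root}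

/-- The depth of the tree: the maximal depth of a vertex. -/
def depth (T : RTree S) : ℕ := S.sup T.dp

/-- The set of descent edges `(i, parent i)` with `i > parent i`, recorded by
the child endpoint `i`. -/
def desSet (T : RTree S) : Finset ℕ :=
  S.filter fun i => i ≠ T.root ∧ T.parent i < i

/-- The number of descents of `T`. -/
def des (T : RTree S) : ℕ := T.desSet.card

/-- The major index of `T`: the sum, over all descent edges `(i,j)` of `T`
(with `j = parent i`), of `depth T - dp j`, i.e. of the minimal rank of `j`. -/
def maj (T : RTree S) : ℕ :=
  ∑ i ∈ T.desSet, (T.depth - T.dp (T.parent i))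

/-- The statistic `μ(T)`: the sum, over all edges `(i,j)` of `T`
(with `j = parent i`), of `depth T - dp j`. -/
def mu (T : RTree S) : ℕ :=
  ∑ i ∈ S.filter (fun i => i ≠ T.root), (T.depth - T.dp (T.parent i))

end RTree

/-- `B` is a building set on the finite ground set `S`. -/
def IsBuildingSet (S : Finset ℕ) (B : Finset (Finset ℕ)) : Prop :=
  (∀ I ∈ B, I ⊆ S ∧ I.Nonempty) ∧
  (∀ I ∈ B, ∀ J ∈ B, (I ∩ J).Nonempty → I ∪ J ∈ B) ∧
  (∀ i ∈ S, ({i} : Finset ℕ) ∈ B)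

/-- `B` is a connected building set on `S`. -/
def IsConnBuildingSet (S : Finset ℕ) (B : Finset (Finset ℕ)) : Prop :=
  IsBuildingSet S B ∧ S ∈ B

/-- `T` is a `B`-tree: all descendant sets belong to `B`, and no union of
descendant sets of `k ≥ 2` pairwise incomparable nodes belongs to `B`. -/
def IsBTree (S : Finset ℕ) (B : Finset (Finset ℕ)) (T : RTree S) : Prop :=
  (∀ i ∈ S, T.desc i ∈ B) ∧
  ∀ I : Finset ℕ, I ⊆ S → 2 ≤ I.card →
    (∀ i ∈ I, ∀ j ∈ I, i ≠ j → i ∉ T.desc j ∧ j ∉ T.desc i) →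
    I.biUnion T.desc ∉ B

lemma swap_image_aux (a b : ℕ) (I : Finset ℕ) (ha : a ∈ I) (hb : b ∉ I) :
    I.image (Equiv.swap a b) = insert b (I.erase a) := by
  ext y
  simp only [Finset.mem_image, Finset.mem_insert, Finset.mem_erase]
  constructor
  · rintro ⟨x, hx, rfl⟩
    rcases eq_or_ne x a with rfl | hxa
    · left; simp
    rcases eq_or_ne x b with rfl | hxb
    · exact absurd hx hb
    · right
      rw [Equiv.swap_apply_of_ne_of_ne hxa hxb]
      exact ⟨hxa, hx⟩
  · rintro (hyb | ⟨hya, hy⟩)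
    · exact ⟨a, ha, by rw [hyb, Equiv.swap_apply_left]⟩
    · exact ⟨y, hy, Equiv.swap_apply_of_ne_of_ne hya (fun h => hb (h ▸ hy))⟩

/-- Transitivity: from invariance under all `S`-preserving permutations, any
subset of `S` with the same cardinality as a member of `B` lies in `B`. -/
lemma trans_aux (S : Finset ℕ) (B : Finset (Finset ℕ))
    (hinv : ∀ σ : Equiv.Perm ℕ, (∀ i ∈ S, σ i ∈ S) → ∀ I ∈ B, I.image σ ∈ B) :
    ∀ m (I : Finset ℕ), I ∈ B → I ⊆ S → ∀ J ⊆ S, J.card = I.card →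
      (J \ I).card = m → J ∈ B := by
  intro m
  induction m with
  | zero =>
    intro I hI hIS J hJS hcard h0
    have hsub : J ⊆ I := by
      rw [← Finset.sdiff_eq_empty_iff_subset]
      exact Finset.card_eq_zero.mp h0
    have : J = I := Finset.eq_of_subset_of_card_le hsub (le_of_eq hcard.symm)
    rwa [this]
  | succ m ih =>
    intro I hI hIS J hJS hcard hm
    have hJIne : (J \ I).Nonempty := by
      rw [← Finset.card_pos, hm]; omega
    obtain ⟨b, hb⟩ := hJIne
    have hbJ : b ∈ J := (Finset.mem_sdiff.mp hb).1
    have hbI : b ∉ I := (Finset.mem_sdiff.mp hb).2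
    have hIJne : (I \ J).Nonempty := by
      by_contra h
      rw [Finset.not_nonempty_iff_eq_empty, Finset.sdiff_eq_empty_iff_subset] at h
      have : I = J := Finset.eq_of_subset_of_card_le h (le_of_eq hcard)
      rw [this, Finset.sdiff_self] at hm
      simp at hm
    obtain ⟨a, ha⟩ := hIJne
    have haI : a ∈ I := (Finset.mem_sdiff.mp ha).1
    have haJ : a ∉ J := (Finset.mem_sdiff.mp ha).2
    have hσ : ∀ i ∈ S, (Equiv.swap a b) i ∈ S := by
      intro i hi
      rcases eq_or_ne i a with rfl | hia
      · rw [Equiv.swap_apply_left]; exact hJS hbJ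
      rcases eq_or_ne i b with rfl | hib
      · rw [Equiv.swap_apply_right]; exact hIS haI
      · rwa [Equiv.swap_apply_of_ne_of_ne hia hib]
    have hI' : insert b (I.erase a) ∈ B := by
      rw [← swap_image_aux a b I haI hbI]
      exact hinv _ hσ I hI
    have hI'S : insert b (I.erase a) ⊆ S :=
      Finset.insert_subset (hJS hbJ) ((Finset.erase_subset a I).trans hIS)
    have hcard' : (insert b (I.erase a)).card = I.card := by
      rw [Finset.card_insert_of_notMem (fun h => hbI (Finset.mem_of_mem_erase h)),
        Finset.card_erase_of_mem haI]
      have : 1 ≤ I.card := Finset.card_pos.mpr ⟨a, haI⟩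
      omega
    have hdiff : J \ insert b (I.erase a) = (J \ I).erase b := by
      ext x
      simp only [Finset.mem_sdiff, Finset.mem_insert, Finset.mem_erase, not_or, not_and]
      constructor
      · rintro ⟨hxJ, hxb, hx⟩
        have hxa : x ≠ a := fun h => haJ (h ▸ hxJ)
        exact ⟨hxb, hxJ, fun hxI => (hx hxa) hxI⟩
      · rintro ⟨hxb, hxJ, hxI⟩
        exact ⟨hxJ, hxb, fun _ h => hxI h⟩
    exact ih (insert b (I.erase a)) hI' hI'S J hJS (hcard.trans hcard'.symm)
      (by rw [hdiff, Finset.card_erase_of_mem hb, hm]; omega)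

/-- Upward closure: if all `k`-subsets of `S` lie in `B`, so do all `j`-subsets
for `j ≥ k`. -/
lemma level_aux (S : Finset ℕ) (B : Finset (Finset ℕ)) (hb : IsBuildingSet S B)
    (k : ℕ) (hk2 : 2 ≤ k)
    (hbase : ∀ J ⊆ S, J.card = k → J ∈ B) :
    ∀ j, k ≤ j → ∀ J ⊆ S, J.card = j → J ∈ B := by
  intro j
  induction j with
  | zero => omega
  | succ j ih =>
    intro hkj J hJS hcard
    rcases eq_or_lt_of_le hkj with heq | hlt
    · exact hbase J hJS (hcard.trans heq.symm)
    have hkj' : k ≤ j := by omega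
    have hJ3 : 3 ≤ J.card := by omega
    obtain ⟨a, haJ, b, hbJ, hab⟩ := Finset.one_lt_card.mp (by omega : 1 < J.card)
    have hea : J.erase a ∈ B := ih hkj' (J.erase a) ((Finset.erase_subset a J).trans hJS)
      (by rw [Finset.card_erase_of_mem haJ, hcard]; omega)
    have heb : J.erase b ∈ B := ih hkj' (J.erase b) ((Finset.erase_subset b J).trans hJS)
      (by rw [Finset.card_erase_of_mem hbJ, hcard]; omega)
    have hne : ((J.erase a) ∩ (J.erase b)).Nonempty := by
      rw [← Finset.card_pos]
      have h1 := Finset.card_union_add_card_inter (J.erase a) (J.erase b)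
      have h2 : (J.erase a ∪ J.erase b).card ≤ J.card :=
        Finset.card_le_card (Finset.union_subset (Finset.erase_subset a J)
          (Finset.erase_subset b J))
      rw [Finset.card_erase_of_mem haJ, Finset.card_erase_of_mem hbJ] at h1
      omega
    have hun : J.erase a ∪ J.erase b = J := by
      ext x
      simp only [Finset.mem_union, Finset.mem_erase]
      constructor
      · rintro (⟨_, h⟩ | ⟨_, h⟩) <;> exact h
      · intro hx
        rcases eq_or_ne x a with rfl | hxa
        · exact Or.inr ⟨hab, hx⟩
        · exact Or.inl ⟨hxa, hx⟩
    have := hb.2.1 _ hea _ heb hne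
    rwa [hun] at this

lemma nat_exists_min (P : ℕ → Prop) (h : ∃ m, P m) :
    ∃ k, P k ∧ ∀ m, P m → k ≤ m :=
  ⟨Nat.find h, Nat.find_spec h, fun _ hm => Nat.find_le hm⟩

/-- A connected building set `B` on `[n]` (`n ≥ 2`) is
invariant under the natural `S_n`-action on subsets of `[n]` iff there is
`2 ≤ k ≤ n` with `B` consisting of all singletons together with all subsets of
cardinality `j` for every `k ≤ j ≤ n`. -/
theorem Sn_invariant_building_set_iff
    (n : ℕ) (hn : 2 ≤ n)
    (B : Finset (Finset ℕ))
    (hB : IsConnBuildingSet (Finset.Icc 1 n) B) :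
    (∀ σ : Equiv.Perm ℕ, (∀ i ∈ Finset.Icc 1 n, σ i ∈ Finset.Icc 1 n) →
        ∀ I ∈ B, I.image σ ∈ B) ↔
      ∃ k, 2 ≤ k ∧ k ≤ n ∧
        B = (Finset.Icc 1 n).image (fun i => ({i} : Finset ℕ)) ∪
            ((Finset.Icc 1 n).powerset.filter fun I => k ≤ I.card) := by
  set S := Finset.Icc 1 n with hS
  have hScard : S.card = n := by simp [hS]
  constructor
  · intro hinv
    -- the minimum cardinality of a non-singleton member of B
    have hSB : S ∈ B := hB.2
    obtain ⟨k, ⟨I₀, hI₀B, hI₀card, hk2⟩, hkmin'⟩ :=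
      nat_exists_min (fun m => ∃ I ∈ B, I.card = m ∧ 2 ≤ m) ⟨n, S, hSB, hScard, hn⟩
    have hkn : k ≤ n := hkmin' n ⟨S, hSB, hScard, hn⟩
    have hkmin : ∀ I ∈ B, 2 ≤ I.card → k ≤ I.card := fun I hI h2 =>
      hkmin' I.card ⟨I, hI, rfl, h2⟩
    have hI₀S : I₀ ⊆ S := (hB.1.1 I₀ hI₀B).1
    have hbase : ∀ J ⊆ S, J.card = k → J ∈ B := fun J hJS hJc =>
      trans_aux S B hinv (J \ I₀).card I₀ hI₀B hI₀S J hJS (by rw [hJc, hI₀card]) rfl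
    have hall : ∀ j, k ≤ j → ∀ J ⊆ S, J.card = j → J ∈ B :=
      level_aux S B hB.1 k hk2 hbase
    refine ⟨k, hk2, hkn, ?_⟩
    ext I
    simp only [Finset.mem_union, Finset.mem_image, Finset.mem_filter, Finset.mem_powerset]
    constructor
    · intro hI
      obtain ⟨hIS, hIne⟩ := hB.1.1 I hI
      rcases eq_or_lt_of_le (show 1 ≤ I.card from Finset.card_pos.mpr hIne) with h1 | h2
      · obtain ⟨i, rfl⟩ := Finset.card_eq_one.mp h1.symm
        exact Or.inl ⟨i, hIS (Finset.mem_singleton_self i), rfl⟩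
      · exact Or.inr ⟨hIS, hkmin I hI h2⟩
    · rintro (⟨i, hi, rfl⟩ | ⟨hIS, hkI⟩)
      · exact hB.1.2.2 i hi
      · exact hall I.card hkI I hIS rfl
  · rintro ⟨k, hk2, hkn, rfl⟩
    intro σ hσ I hI
    rw [Finset.mem_union] at hI ⊢
    rcases hI with hI | hI
    · obtain ⟨i, hi, rfl⟩ := Finset.mem_image.mp hI
      left
      refine Finset.mem_image.mpr ⟨σ i, hσ i hi, ?_⟩
      simp
    · rw [Finset.mem_filter, Finset.mem_powerset] at hI
      right
      rw [Finset.mem_filter, Finset.mem_powerset]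
      constructor
      · intro x hx
        obtain ⟨y, hy, rfl⟩ := Finset.mem_image.mp hx
        exact hσ y (hI.1 hy)
      · rw [Finset.card_image_of_injective I σ.injective]
        exact hI.2
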